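/- Let f be a slice regular self-mapping of the open unit ball 𝔹 ⊂ 𝕆. Then for all w ∈ 𝔹, (1 - |f(w)|²)/(1 - |w|²) ≥ |1 - ⟨f(0), f(w)⟩|²/(1 - |f(0)|²), where ⟨·,·⟩ is the Euclidean inner product on 𝕆 ≅ ℝ⁸. -/

import Mathlib

noncomputable section

open Quaternion

/-- The octonions, realized via the Cayley–Dickson construction over the quaternions. -/
abbrev Octo := ℍ[ℝ] × ℍ[ℝ]

namespace Octo

/-- Octonion multiplication (Cayley–Dickson): (z₁,z₂)(w₁,w₂) = (z₁w₁ - w̄₂z₂, z₂w̄₁ + w₂z₁). -/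
def mul' (z w : Octo) : Octo :=
  (z.1 * w.1 - star w.2 * z.2, z.2 * star w.1 + w.2 * z.1)

/-- Octonionic conjugation. -/
def conj' (x : Octo) : Octo := (star x.1, -x.2)

/-- The multiplicative unit of the octonions. -/
def one' : Octo := (1, 0)

/-- The embedding of the reals into the octonions. -/
def emb (x : ℝ) : Octo := (algebraMap ℝ ℍ[ℝ] x, 0)

/-- The real part of an octonion. -/
def re' (x : Octo) : ℝ := x.1.re

/-- The imaginary part of an octonion. -/
def im' (x : Octo) : Octo := x - emb (re' x)

/-- The standard Euclidean inner product on 𝕆 ≅ ℝ⁸. -/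
def inner' (x y : Octo) : ℝ := (inner ℝ x.1 y.1 : ℝ) + (inner ℝ x.2 y.2 : ℝ)

/-- The Euclidean norm on the octonions. -/
def norm' (x : Octo) : ℝ := Real.sqrt (inner' x x)

/-- The multiplicative inverse of a nonzero octonion. -/
def inv' (x : Octo) : Octo := (inner' x x)⁻¹ • conj' x

/-- The associator [u,v,w] = (uv)w - u(vw). -/
def assoc' (u v w : Octo) : Octo := mul' (mul' u v) w - mul' u (mul' v w)

/-- n-th power of an octonion. -/
def pow' (x : Octo) : ℕ → Octo
  | 0 => one'
  | n + 1 => mul' x (pow' x n)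

/-- A purely imaginary unit octonion: I ∈ 𝕊 iff I² = -1. -/
def IsImUnit (I : Octo) : Prop := mul' I I = - one'

/-- The point x + yI on the slice ℂ_I. -/
def pt (I : Octo) (p : ℝ × ℝ) : Octo := emb p.1 + p.2 • I

/-- The slice ℂ_I = ℝ ⊕ Iℝ. -/
def sliceSet (I : Octo) : Set Octo := {z | ∃ p : ℝ × ℝ, z = pt I p}

/-- e^{θI} = cos θ + (sin θ) I. -/
def expI (θ : ℝ) (I : Octo) : Octo := emb (Real.cos θ) + Real.sin θ • I

/-- Slice regularity: on every slice ℂ_I the function is holomorphic, i.e. real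
differentiable with ∂f/∂x + I ∂f/∂y = 0. -/
def SliceRegular (Ω : Set Octo) (f : Octo → Octo) : Prop :=
  ∀ I, IsImUnit I → ∀ p : ℝ × ℝ, pt I p ∈ Ω →
    ∃ fx fy : Octo,
      HasFDerivAt (fun q : ℝ × ℝ => f (pt I q))
        ((ContinuousLinearMap.fst ℝ ℝ ℝ).smulRight fx
          + (ContinuousLinearMap.snd ℝ ℝ ℝ).smulRight fy) p
      ∧ fx + mul' I fy = 0

/-- Symmetric slice domain: open, connected, meeting the real axis, with each slice a
domain, and axially symmetric. -/
def SymSliceDomain (Ω : Set Octo) : Prop :=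
  IsOpen Ω ∧ IsConnected Ω ∧ (∃ x : ℝ, emb x ∈ Ω) ∧
  (∀ I, IsImUnit I → IsConnected {p : ℝ × ℝ | pt I p ∈ Ω}) ∧
  (∀ I J, IsImUnit I → IsImUnit J → ∀ p : ℝ × ℝ, pt I p ∈ Ω → pt J p ∈ Ω)

/-- The open unit ball 𝔹 of the octonions. -/
def ball1 : Set Octo := {z | norm' z < 1}

end Octo

namespace Octo

open Quaternion

lemma mul'_left_alt (u x : Octo) : mul' u (mul' u x) = mul' (mul' u u) x := by
  obtain ⟨a, b⟩ := u; obtain ⟨z, w⟩ := x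
  simp only [mul', Prod.mk.injEq]
  constructor <;>
  · ext <;>
      simp only [Quaternion.re_mul, Quaternion.imI_mul, Quaternion.imJ_mul, Quaternion.imK_mul,
        Quaternion.re_sub, Quaternion.imI_sub, Quaternion.imJ_sub, Quaternion.imK_sub,
        Quaternion.re_add, Quaternion.imI_add, Quaternion.imJ_add, Quaternion.imK_add,
        Quaternion.re_star, Quaternion.imI_star, Quaternion.imJ_star, Quaternion.imK_star] <;>
      ring

lemma inner'_mul'_self (u x : Octo) :
    inner' (mul' u x) (mul' u x) = inner' u u * inner' x x := by
  obtain ⟨a, b⟩ := u; obtain ⟨z, w⟩ := x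
  simp only [mul', inner', Quaternion.inner_self, Quaternion.normSq_def']
  simp only [Quaternion.re_mul, Quaternion.imI_mul, Quaternion.imJ_mul, Quaternion.imK_mul,
    Quaternion.re_sub, Quaternion.imI_sub, Quaternion.imJ_sub, Quaternion.imK_sub,
    Quaternion.re_add, Quaternion.imI_add, Quaternion.imJ_add, Quaternion.imK_add,
    Quaternion.re_star, Quaternion.imI_star, Quaternion.imJ_star, Quaternion.imK_star]
  ring

end Octo
namespace Octo

open Quaternion

lemma mul'_add_right (u x y : Octo) : mul' u (x + y) = mul' u x + mul' u y := by
  simp only [mul', Prod.fst_add, Prod.snd_add, star_add, Prod.mk_add_mk, Prod.mk.injEq]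
  constructor <;> noncomm_ring

lemma mul'_smul_right (u : Octo) (t : ℝ) (x : Octo) : mul' u (t • x) = t • mul' u x := by
  simp only [mul', Prod.smul_fst, Prod.smul_snd, Quaternion.star_smul, Prod.smul_mk, Prod.mk.injEq,
    smul_sub, smul_add]
  constructor <;>
    simp [smul_mul_assoc, mul_smul_comm, Quaternion.star_smul]

lemma mul'_smul_left (u : Octo) (t : ℝ) (x : Octo) : mul' (t • u) x = t • mul' u x := by
  simp only [mul', Prod.smul_fst, Prod.smul_snd, Prod.smul_mk, Prod.mk.injEq,
    smul_sub, smul_add]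
  constructor <;>
    simp [smul_mul_assoc, mul_smul_comm]

lemma mul'_neg_left (u x : Octo) : mul' (-u) x = - mul' u x := by
  simp only [mul', Prod.fst_neg, Prod.snd_neg, Prod.neg_mk, Prod.mk.injEq]
  constructor <;> noncomm_ring

lemma mul'_neg_right (u x : Octo) : mul' u (-x) = - mul' u x := by
  simp only [mul', Prod.fst_neg, Prod.snd_neg, star_neg, Prod.neg_mk, Prod.mk.injEq]
  constructor <;> noncomm_ring

lemma mul'_zero_right (u : Octo) : mul' u 0 = 0 := by
  simp [mul']

lemma mul'_neg_one (x : Octo) : mul' (-one') x = -x := by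
  simp only [mul', one', Prod.fst_neg, Prod.snd_neg, Prod.neg_mk, neg_zero, star_zero,
    Prod.mk.injEq]
  obtain ⟨z, w⟩ := x
  simp [Prod.neg_mk]

lemma isImUnit_JJ {I : Octo} (hI : IsImUnit I) (x : Octo) :
    mul' I (mul' I x) = -x := by
  rw [mul'_left_alt, hI, mul'_neg_one]

end Octo
namespace Octo

open Quaternion

lemma inner'_comm (x y : Octo) : inner' x y = inner' y x := by
  simp [inner', real_inner_comm]

lemma inner'_self_nonneg (x : Octo) : 0 ≤ inner' x x :=
  add_nonneg real_inner_self_nonneg real_inner_self_nonneg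

lemma inner'_self_eq_zero {x : Octo} (h : inner' x x = 0) : x = 0 := by
  simp only [inner'] at h
  have n1 : (0:ℝ) ≤ inner ℝ x.1 x.1 := real_inner_self_nonneg
  have n2 : (0:ℝ) ≤ inner ℝ x.2 x.2 := real_inner_self_nonneg
  have e1 : x.1 = 0 := inner_self_eq_zero (𝕜 := ℝ).mp (by linarith)
  have e2 : x.2 = 0 := inner_self_eq_zero (𝕜 := ℝ).mp (by linarith)
  exact Prod.ext e1 e2

lemma inner'_add_left (x y z : Octo) : inner' (x + y) z = inner' x z + inner' y z := by
  simp [inner', inner_add_left]; ring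

lemma inner'_add_right (x y z : Octo) : inner' x (y + z) = inner' x y + inner' x z := by
  simp [inner', inner_add_right]; ring

lemma inner'_smul_left (t : ℝ) (x y : Octo) : inner' (t • x) y = t * inner' x y := by
  simp [inner', real_inner_smul_left]; ring

lemma inner'_smul_right (t : ℝ) (x y : Octo) : inner' x (t • y) = t * inner' x y := by
  simp [inner', real_inner_smul_right]; ring

lemma inner'_neg_left (x y : Octo) : inner' (-x) y = - inner' x y := by
  simp [inner', inner_neg_left]; ring

lemma inner'_zero_left (y : Octo) : inner' 0 y = 0 := by
  simp [inner']

lemma norm'_sq (x : Octo) : norm' x ^ 2 = inner' x x :=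
  Real.sq_sqrt (inner'_self_nonneg x)

lemma norm'_nonneg (x : Octo) : 0 ≤ norm' x := Real.sqrt_nonneg _

lemma mem_ball1 {x : Octo} : x ∈ ball1 ↔ inner' x x < 1 := by
  rw [ball1, Set.mem_setOf_eq, norm', Real.sqrt_lt' one_pos, one_pow]

/-- polarized version of `inner'_mul'_self` -/
lemma inner'_mul'_mul' (u x y : Octo) :
    inner' (mul' u x) (mul' u y) = inner' u u * inner' x y := by
  have h := inner'_mul'_self u (x + y)
  rw [mul'_add_right, inner'_add_left, inner'_add_right, inner'_add_right,
    inner'_add_left, inner'_add_right, inner'_add_right] at h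
  have hx := inner'_mul'_self u x
  have hy := inner'_mul'_self u y
  have hc : inner' (mul' u y) (mul' u x) = inner' (mul' u x) (mul' u y) := inner'_comm _ _
  have hc2 : inner' y x = inner' x y := inner'_comm _ _
  linear_combination (h - hx - hy - hc) / 2 + inner' u u / 2 * hc2

lemma isImUnit_re {I : Octo} (hI : IsImUnit I) : I.1.re = 0 ∧ inner' I I = 1 := by
  obtain ⟨a, b⟩ := I
  have h1 : a * a - star b * b = -1 ∧ b * star a + b * a = 0 := by
    have h := hI
    simp only [IsImUnit, mul', one', Prod.neg_mk, Prod.mk.injEq] at h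
    exact ⟨h.1, by simpa using h.2⟩
  have h2 : b * (star a + a) = 0 := by rw [mul_add]; exact h1.2
  have h3 : (2 * a.re) • b = 0 := by
    rw [← Quaternion.mul_coe_eq_smul]
    rw [← Quaternion.self_add_star', add_comm a (star a)]
    exact h2
  have hre : a.re = 0 := by
    rcases smul_eq_zero.mp h3 with h | h
    · linarith [h]
    · have ha : a * a = -1 := by
        have := h1.1; rw [h] at this; simpa using this
      have c1 := congrArg QuaternionAlgebra.re ha
      have c2 := congrArg QuaternionAlgebra.imI ha
      have c3 := congrArg QuaternionAlgebra.imJ ha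
      have c4 := congrArg QuaternionAlgebra.imK ha
      simp only [Quaternion.re_mul, Quaternion.imI_mul, Quaternion.imJ_mul, Quaternion.imK_mul,
        Quaternion.re_neg, Quaternion.imI_neg, Quaternion.imJ_neg, Quaternion.imK_neg,
        Quaternion.re_one, Quaternion.imI_one, Quaternion.imJ_one, Quaternion.imK_one,
        neg_zero] at c1 c2 c3 c4
      nlinarith [c1, c2, c3, c4, sq_nonneg a.re]
  refine ⟨hre, ?_⟩
  have hsa : star a = -a := by
    ext <;> simp [hre]
  have haa : a * a = -((normSq a : ℝ) : ℍ[ℝ]) := by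
    calc a * a = -(star a * a) := by rw [hsa]; noncomm_ring
    _ = -((normSq a : ℝ) : ℍ[ℝ]) := by rw [Quaternion.star_mul_self]
  have hbb : star b * b = ((normSq b : ℝ) : ℍ[ℝ]) := Quaternion.star_mul_self b
  have key : ((normSq a + normSq b : ℝ) : ℍ[ℝ]) = 1 := by
    have h := h1.1
    rw [haa, hbb] at h
    have h' : -(((normSq a : ℝ) : ℍ[ℝ]) + ((normSq b : ℝ) : ℍ[ℝ])) = -1 := by
      rw [neg_add]
      rw [← sub_eq_add_neg]
      exact h
    have := neg_inj.mp h'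
    push_cast
    exact this
  have hkey : normSq a + normSq b = 1 := by
    have := congrArg QuaternionAlgebra.re key; simpa using this
  simp only [inner', Quaternion.inner_self]
  exact hkey

end Octo
namespace Octo

open Quaternion

lemma emb_zero : emb 0 = 0 := by simp [emb]

lemma pt_zero {I : Octo} : pt I (0, 0) = 0 := by
  simp [pt, emb_zero]

lemma inner'_emb_emb (x y : ℝ) : inner' (emb x) (emb y) = x * y := by
  simp only [inner', emb]
  simp [Quaternion.inner_def]

lemma inner'_emb_I {I : Octo} (hI : IsImUnit I) (x : ℝ) : inner' (emb x) I = 0 := by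
  have hre := (isImUnit_re hI).1
  simp only [inner', emb]
  simp [Quaternion.inner_def, hre]

lemma inner'_pt_pt {I : Octo} (hI : IsImUnit I) (p : ℝ × ℝ) :
    inner' (pt I p) (pt I p) = p.1 ^ 2 + p.2 ^ 2 := by
  have h1 := (isImUnit_re hI).2
  rw [pt, inner'_add_left, inner'_add_right, inner'_add_right,
    inner'_smul_left, inner'_smul_right, inner'_smul_left, inner'_smul_right,
    inner'_emb_emb, inner'_emb_I hI, h1]
  have : inner' I (emb p.1) = 0 := by rw [inner'_comm]; exact inner'_emb_I hI p.1
  rw [this]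
  ring

lemma norm'_pt {I : Octo} (hI : IsImUnit I) (p : ℝ × ℝ) :
    norm' (pt I p) = Real.sqrt (p.1 ^ 2 + p.2 ^ 2) := by
  rw [norm', inner'_pt_pt hI]

/-- every octonion lies on a slice -/
lemma exists_slice (w : Octo) : ∃ I p, IsImUnit I ∧ w = pt I p := by
  by_cases hv : im' w = 0
  · refine ⟨((⟨0, 1, 0, 0⟩ : ℍ[ℝ]), 0), (re' w, 0), ?_, ?_⟩
    · show mul' _ _ = _
      simp only [mul', one', Prod.neg_mk, Prod.mk.injEq]
      constructor
      · show (⟨0, 1, 0, 0⟩ : ℍ[ℝ,-1,0,-1]) * ⟨0, 1, 0, 0⟩ - star (0 : ℍ[ℝ,-1,0,-1]) * 0 = -1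
        ext <;> simp
      · show (0 : ℍ[ℝ,-1,0,-1]) * star (⟨0, 1, 0, 0⟩ : ℍ[ℝ,-1,0,-1]) + 0 * ⟨0, 1, 0, 0⟩ = -0
        simp
    · have : w = emb (re' w) := by
        have := sub_eq_zero.mp hv
        exact this
      rw [pt]
      simpa using this
  · set v := im' w with hvdef
    have hv1re : v.1.re = 0 := by
      simp [hvdef, im', re', emb, Quaternion.re_coe]
    have hvv : 0 < inner' v v := by
      rcases lt_or_eq_of_le (inner'_self_nonneg v) with h | h
      · exact h
      · exact absurd (inner'_self_eq_zero h.symm) hv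
    have hnv : 0 < norm' v := Real.sqrt_pos.mpr hvv
    set t : ℝ := (norm' v)⁻¹ with ht
    refine ⟨t • v, (re' w, norm' v), ?_, ?_⟩
    · show mul' _ _ = _
      rw [mul'_smul_left, mul'_smul_right]
      have hmv : mul' v v = (-(inner' v v)) • one' := by
        obtain ⟨v1, v2⟩ := v
        simp only [mul', one', Prod.smul_mk, Prod.mk.injEq]
        have hs : star v1 = -v1 := by ext <;> simp_all
        constructor
        · have e1 : v1 * v1 = -((normSq v1 : ℝ) : ℍ[ℝ]) := by
            calc v1 * v1 = -(star v1 * v1) := by rw [hs]; noncomm_ring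
            _ = _ := by rw [Quaternion.star_mul_self]
          rw [e1, Quaternion.star_mul_self]
          simp only [inner', Quaternion.inner_self]
          ext <;> simp <;> ring
        · have : v2 * star v1 + v2 * v1 = 0 := by rw [hs]; noncomm_ring
          simpa using this
      rw [hmv, smul_smul, smul_smul]
      have hone : t * (t * inner' v v) = 1 := by
        have hsx : Real.sqrt (inner' v v) ≠ 0 := ne_of_gt (Real.sqrt_pos.mpr hvv)
        have h2 : Real.sqrt (inner' v v) * Real.sqrt (inner' v v) = inner' v v :=
          Real.mul_self_sqrt (le_of_lt hvv)
        rw [ht, norm']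
        field_simp
        rw [Real.sq_sqrt (le_of_lt hvv)]
      have hkey : t * t * -(inner' v v) = -1 := by linear_combination -hone
      rw [hkey, neg_smul, one_smul]
    · rw [pt]
      have h2 : (norm' v) • t • v = v := by
        rw [smul_smul, mul_inv_cancel₀ (ne_of_gt hnv), one_smul]
      rw [h2]
      rw [hvdef, im']
      abel

end Octo
namespace Octo

open Quaternion

lemma inner'_neg_right (x y : Octo) : inner' x (-y) = - inner' x y := by
  rw [inner'_comm, inner'_neg_left, inner'_comm]

lemma inner'_J_skew {I : Octo} (hI : IsImUnit I) (x y : Octo) :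
    inner' (mul' I x) y = - inner' x (mul' I y) := by
  have h1 : y = -(mul' I (mul' I y)) := by rw [isImUnit_JJ hI, neg_neg]
  calc inner' (mul' I x) y = inner' (mul' I x) (-(mul' I (mul' I y))) := by rw [← h1]
    _ = - inner' (mul' I x) (mul' I (mul' I y)) := inner'_neg_right _ _
    _ = - (inner' I I * inner' x (mul' I y)) := by rw [inner'_mul'_mul']
    _ = - inner' x (mul' I y) := by rw [(isImUnit_re hI).2, one_mul]

lemma inner'_J_J {I : Octo} (hI : IsImUnit I) (x y : Octo) :
    inner' (mul' I x) (mul' I y) = inner' x y := by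
  rw [inner'_mul'_mul', (isImUnit_re hI).2, one_mul]

end Octo

open Octo Quaternion

/-- `Octo` with the complex structure given by left multiplication by `I`. -/
def Oc (I : Octo) (_hI : IsImUnit I) : Type := Octo

namespace Oc

variable (I : Octo) (hI : IsImUnit I)

/-- identity map into `Oc`. -/
def mk : Octo → Oc I hI := fun x => x

/-- identity map out of `Oc`. -/
def unmk : Oc I hI → Octo := fun x => x

instance : AddCommGroup (Oc I hI) := inferInstanceAs (AddCommGroup Octo)

instance : SMul ℂ (Oc I hI) :=
  ⟨fun z x => mk I hI (z.re • unmk I hI x + z.im • mul' I (unmk I hI x))⟩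

lemma smul_def (z : ℂ) (x : Oc I hI) :
    z • x = mk I hI (z.re • unmk I hI x + z.im • mul' I (unmk I hI x)) := rfl

lemma unmk_add (x y : Oc I hI) : unmk I hI (x + y) = unmk I hI x + unmk I hI y := rfl
lemma unmk_mk (x : Octo) : unmk I hI (mk I hI x) = x := rfl
lemma mk_add (x y : Octo) : mk I hI (x + y) = mk I hI x + mk I hI y := rfl

instance : Module ℂ (Oc I hI) where
  one_smul x := by
    show mk I hI ((1:ℂ).re • unmk I hI x + (1:ℂ).im • mul' I (unmk I hI x)) = x
    simp only [Complex.one_re, Complex.one_im, one_smul, zero_smul, add_zero]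
    rfl
  mul_smul z w x := by
    simp only [smul_def, unmk_mk, mul'_add_right, mul'_smul_right, isImUnit_JJ hI,
      Complex.mul_re, Complex.mul_im]
    congr 1
    simp only [smul_add, smul_smul, smul_neg]
    module
  smul_zero z := by
    show mk I hI (_ • unmk I hI 0 + _ • mul' I (unmk I hI 0)) = 0
    show mk I hI (_ • (0:Octo) + _ • mul' I (0:Octo)) = 0
    simp only [smul_zero, mul'_zero_right, add_zero]
    rfl
  smul_add z x y := by
    simp only [smul_def, unmk_add, mul'_add_right, smul_add]
    simp only [mk, unmk]
    abel
  add_smul z w x := by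
    simp only [smul_def, Complex.add_re, Complex.add_im, add_smul]
    simp only [mk, unmk]
    abel
  zero_smul x := by
    show mk I hI ((0:ℂ).re • unmk I hI x + (0:ℂ).im • mul' I (unmk I hI x)) = 0
    simp only [Complex.zero_re, Complex.zero_im, zero_smul, add_zero]
    rfl

/-- the complex inner product core on `Oc`. -/
def core : InnerProductSpace.Core ℂ (Oc I hI) where
  inner x y := ⟨inner' (unmk I hI x) (unmk I hI y), inner' (mul' I (unmk I hI x)) (unmk I hI y)⟩
  conj_inner_symm x y := by
    apply Complex.ext
    · simpa using inner'_comm (unmk I hI y) (unmk I hI x)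
    · show -(inner' (mul' I (unmk I hI y)) (unmk I hI x)) = _
      rw [inner'_J_skew hI, neg_neg, inner'_comm]
  re_inner_nonneg x := inner'_self_nonneg _
  add_left x y z := by
    apply Complex.ext
    · simpa [unmk_add] using inner'_add_left (unmk I hI x) (unmk I hI y) (unmk I hI z)
    · show inner' (mul' I (unmk I hI x + unmk I hI y)) _ = _
      rw [mul'_add_right, inner'_add_left]
      rfl
  smul_left x y z := by
    apply Complex.ext
    · show inner' (z.re • unmk I hI x + z.im • mul' I (unmk I hI x)) (unmk I hI y) = _
      rw [inner'_add_left, inner'_smul_left, inner'_smul_left]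
      simp [Complex.mul_re]
    · show inner' (mul' I (z.re • unmk I hI x + z.im • mul' I (unmk I hI x))) (unmk I hI y) = _
      rw [mul'_add_right, mul'_smul_right, mul'_smul_right, isImUnit_JJ hI,
        inner'_add_left, inner'_smul_left, inner'_smul_left, inner'_neg_left]
      simp [Complex.mul_im]
  definite x hx := by
    have : inner' (unmk I hI x) (unmk I hI x) = 0 := by
      have := congrArg Complex.re hx
      simpa using this
    exact inner'_self_eq_zero this

instance : NormedAddCommGroup (Oc I hI) := (core I hI).toNormedAddCommGroup

instance : InnerProductSpace ℂ (Oc I hI) := InnerProductSpace.ofCore _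

lemma norm_mk (x : Octo) : ‖mk I hI x‖ = norm' x := by
  rw [@norm_eq_sqrt_re_inner ℂ]
  rfl

lemma inner_re (x y : Octo) :
    (inner (𝕜 := ℂ) (mk I hI x) (mk I hI y)).re = inner' x y := rfl

lemma real_smul (r : ℝ) (x : Oc I hI) :
    r • x = mk I hI (r • unmk I hI x) := by
  show ((r : ℂ) • x) = _
  rw [smul_def]
  simp [mk]
  rfl

/-- the identity, as a real-linear equivalence `Octo ≃ₗ[ℝ] Oc I hI`. -/
def equivℝ : Octo ≃ₗ[ℝ] Oc I hI where
  toFun := mk I hI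
  invFun := unmk I hI
  left_inv x := rfl
  right_inv x := rfl
  map_add' x y := rfl
  map_smul' r x := by rw [real_smul]; rfl

end Oc
set_option maxHeartbeats 1000000 in
open Metric in
/-- Schwarz–Pick inequality for holomorphic maps from the unit disc to the unit ball
of a complex inner product space. -/
theorem schwarz_pick_core {E : Type*} [NormedAddCommGroup E] [InnerProductSpace ℂ E]
    {F : ℂ → E} (hd : DifferentiableOn ℂ F (ball 0 1))
    (hm : ∀ ζ ∈ ball (0:ℂ) 1, ‖F ζ‖ < 1) {z : ℂ} (hz : z ∈ ball (0:ℂ) 1) :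
    ‖1 - (inner ℂ (F 0) (F z) : ℂ)‖ ^ 2 / (1 - ‖F 0‖ ^ 2)
      ≤ (1 - ‖F z‖ ^ 2) / (1 - ‖z‖ ^ 2) := by
  have h0 : (0:ℂ) ∈ ball (0:ℂ) 1 := mem_ball_self one_pos
  have hna : ‖F 0‖ < 1 := hm 0 h0
  have hz1 : ‖z‖ < 1 := by simpa [mem_ball, dist_zero_right] using hz
  have hz2 : (0:ℝ) < 1 - ‖z‖ ^ 2 := by nlinarith [norm_nonneg z]
  by_cases ha0 : F 0 = 0
  · -- easy case: `F 0 = 0`; directly apply the vector-valued Schwarz lemma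
    have hmap : Set.MapsTo F (ball 0 1) (ball (F 0) 1) := fun ζ hζ => by
      rw [mem_ball, dist_eq_norm, ha0, sub_zero]; exact hm ζ hζ
    have hS := Complex.dist_le_div_mul_dist_of_mapsTo_ball hd (hmap.mono_right ball_subset_closedBall) hz
    rw [ha0] at hS
    have hFz : ‖F z‖ ≤ ‖z‖ := by
      simpa [dist_eq_norm] using hS
    rw [ha0]
    simp only [inner_zero_left, sub_zero, norm_zero, map_one, norm_one, one_pow]
    rw [zero_pow two_ne_zero, sub_zero, div_one, le_div_iff₀ hz2]
    nlinarith [norm_nonneg (F z), norm_nonneg z]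
  · -- main case
    set a := F 0 with ha
    have hA0 : (0:ℝ) < ‖a‖ ^ 2 := pow_pos (norm_pos_iff.mpr ha0) 2
    have hA1 : ‖a‖ ^ 2 < 1 := by nlinarith [norm_nonneg a]
    have hAne : ((‖a‖ ^ 2 : ℝ) : ℂ) ≠ 0 := by
      simp only [ne_eq, Complex.ofReal_eq_zero]
      exact ne_of_gt hA0
    set s : ℝ := Real.sqrt (1 - ‖a‖ ^ 2) with hs
    have hs0 : 0 ≤ s := by rw [hs]; positivity
    have hs2 : s ^ 2 = 1 - ‖a‖ ^ 2 := Real.sq_sqrt (by linarith)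
    set α : ℂ → ℂ := fun ζ => (inner ℂ a (F ζ) : ℂ) with hα
    set N : ℂ → E := fun ζ =>
      (1 - α ζ / ((‖a‖ ^ 2 : ℝ) : ℂ)) • a
        - ((s : ℂ)) • (F ζ - (α ζ / ((‖a‖ ^ 2 : ℝ) : ℂ)) • a) with hN
    set G : ℂ → E := fun ζ => (1 - α ζ)⁻¹ • N ζ with hG
    -- the denominator never vanishes
    have hαlt : ∀ ζ ∈ ball (0:ℂ) 1, ‖α ζ‖ < 1 := by
      intro ζ hζ
      have h1 : ‖(inner ℂ a (F ζ) : ℂ)‖ ≤ ‖a‖ * ‖F ζ‖ := norm_inner_le_norm a (F ζ)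
      have h2 : ‖F ζ‖ < 1 := hm ζ hζ
      have h3 : ‖(inner ℂ a (F ζ) : ℂ)‖ < 1 := by
        nlinarith [norm_nonneg a, norm_nonneg (F ζ), norm_nonneg (inner ℂ a (F ζ) : ℂ)]
      simpa [hα] using h3
    have hden : ∀ ζ ∈ ball (0:ℂ) 1, (1 - α ζ) ≠ 0 := by
      intro ζ hζ h
      have he : α ζ = 1 := by linear_combination -h
      have hlt := hαlt ζ hζ
      rw [he] at hlt
      simp at hlt
    -- differentiability
    have hαd : DifferentiableOn ℂ α (ball 0 1) := by
      have he : α = fun ζ => (innerSL ℂ a) (F ζ) := rfl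
      rw [he]
      exact (innerSL ℂ a).differentiable.comp_differentiableOn hd
    have hNd : DifferentiableOn ℂ N (ball 0 1) := by
      apply DifferentiableOn.sub
      · exact ((differentiableOn_const _).sub (hαd.div_const _)).smul_const a
      · exact ((differentiableOn_const _).smul
          (hd.sub ((hαd.div_const _).smul_const a)))
    have hGd : DifferentiableOn ℂ G (ball 0 1) :=
      (((differentiableOn_const _).sub hαd).inv hden).smul hNd
    -- value at zero
    have hα0 : α 0 = ((‖a‖ ^ 2 : ℝ) : ℂ) := by
      rw [hα]
      show (inner ℂ a (F 0) : ℂ) = _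
      rw [← ha, inner_self_eq_norm_sq_to_K]
      norm_cast
    have hG0 : G 0 = 0 := by
      rw [hG]
      show (1 - α 0)⁻¹ • N 0 = 0
      have hN0 : N 0 = 0 := by
        rw [hN]
        show (1 - α 0 / _) • a - ((s:ℂ)) • (F 0 - (α 0 / _) • a) = 0
        rw [hα0, div_self hAne, ← ha]
        simp
      rw [hN0, smul_zero]
    -- the key algebraic identity
    have hid : ∀ ζ ∈ ball (0:ℂ) 1,
        ‖1 - α ζ‖ ^ 2 * (1 - ‖G ζ‖ ^ 2)
          = (1 - ‖a‖ ^ 2) * (1 - ‖F ζ‖ ^ 2) := by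
      intro ζ hζ
      have haa : (inner ℂ a a : ℂ) = ((‖a‖ ^ 2 : ℝ) : ℂ) := by
        rw [inner_self_eq_norm_sq_to_K]; try norm_cast
      have hQa : (inner ℂ a (F ζ - (α ζ / ((‖a‖ ^ 2 : ℝ) : ℂ)) • a) : ℂ) = 0 := by
        have he : (inner ℂ a (F ζ) : ℂ) = α ζ := rfl
        rw [inner_sub_right, inner_smul_right, haa, he, div_mul_cancel₀ _ hAne, sub_self]
      set Q : E := F ζ - (α ζ / ((‖a‖ ^ 2 : ℝ) : ℂ)) • a with hQ
      have hnQ : ‖Q‖ ^ 2 = ‖F ζ‖ ^ 2 - ‖α ζ‖ ^ 2 / ‖a‖ ^ 2 := by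
        have hxa : (inner ℂ (F ζ) a : ℂ) = (starRingEnd ℂ) (α ζ) := by
          rw [← inner_conj_symm]
        rw [hQ, @norm_sub_sq ℂ, inner_smul_right, hxa, norm_smul]
        simp only [RCLike.re_to_complex, norm_div, Complex.norm_real, Real.norm_eq_abs]
        rw [abs_of_pos hA0]
        rw [div_mul_eq_mul_div, Complex.mul_conj]
        rw [show ((Complex.normSq (α ζ) : ℂ)) / ((‖a‖ ^ 2 : ℝ) : ℂ)
              = (((Complex.normSq (α ζ) / ‖a‖ ^ 2 : ℝ)) : ℂ) by push_cast; ring]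
        rw [Complex.ofReal_re, ← Complex.sq_norm]
        field_simp
        try ring
      have hnN : ‖N ζ‖ ^ 2
          = ‖1 - α ζ / ((‖a‖ ^ 2 : ℝ) : ℂ)‖ ^ 2 * ‖a‖ ^ 2 + s ^ 2 * ‖Q‖ ^ 2 := by
        have he : N ζ = (1 - α ζ / ((‖a‖ ^ 2 : ℝ) : ℂ)) • a - ((s:ℂ)) • Q := rfl
        rw [he, @norm_sub_sq ℂ, inner_smul_left, inner_smul_right, hQa, mul_zero, mul_zero]
        rw [map_zero, mul_zero, sub_zero, norm_smul, norm_smul]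
        simp only [Complex.norm_real, Real.norm_eq_abs]
        rw [abs_of_nonneg hs0]
        ring
      have hnG : ‖1 - α ζ‖ ^ 2 * ‖G ζ‖ ^ 2 = ‖N ζ‖ ^ 2 := by
        have he : G ζ = (1 - α ζ)⁻¹ • N ζ := rfl
        rw [he, norm_smul]
        simp only [norm_inv]
        have hne : ‖1 - α ζ‖ ≠ 0 := norm_ne_zero_iff.mpr (hden ζ hζ)
        field_simp
        try ring
      -- now pure real algebra
      have habs1 : ‖1 - α ζ‖ ^ 2
          = 1 - 2 * (α ζ).re + (α ζ).re ^ 2 + (α ζ).im ^ 2 := by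
        rw [Complex.sq_norm, Complex.normSq_apply]
        simp only [Complex.sub_re, Complex.sub_im, Complex.one_re, Complex.one_im]
        ring
      have habs2 : ‖1 - α ζ / ((‖a‖ ^ 2 : ℝ) : ℂ)‖ ^ 2
          = 1 - 2 * (α ζ).re / ‖a‖ ^ 2 + ((α ζ).re ^ 2 + (α ζ).im ^ 2) / (‖a‖ ^ 2) ^ 2 := by
        rw [show (1 : ℂ) - α ζ / ((‖a‖ ^ 2 : ℝ) : ℂ)
              = (((‖a‖ ^ 2 : ℝ) : ℂ) - α ζ) / ((‖a‖ ^ 2 : ℝ) : ℂ) by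
            rw [sub_div, div_self hAne]]
        rw [norm_div, Complex.norm_real, Real.norm_eq_abs, abs_of_pos hA0, div_pow, Complex.sq_norm,
          Complex.normSq_apply]
        simp only [Complex.sub_re, Complex.sub_im, Complex.ofReal_re, Complex.ofReal_im]
        field_simp
        ring
      have habs3 : ‖α ζ‖ ^ 2 = (α ζ).re ^ 2 + (α ζ).im ^ 2 := by
        rw [Complex.sq_norm, Complex.normSq_apply]; ring
      have hAne' : (‖a‖ ^ 2 : ℝ) ≠ 0 := ne_of_gt hA0
      rw [mul_sub, mul_one, hnG, hnN, hnQ, habs1, habs2, habs3, hs2]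
      field_simp
      ring
    -- `G` maps the disc into the unit ball
    have hGlt : ∀ ζ ∈ ball (0:ℂ) 1, ‖G ζ‖ < 1 := by
      intro ζ hζ
      have h1 := hid ζ hζ
      have hne : ‖1 - α ζ‖ ≠ 0 := norm_ne_zero_iff.mpr (hden ζ hζ)
      have h2 : (0:ℝ) < ‖1 - α ζ‖ ^ 2 := by positivity
      have hFζ := hm ζ hζ
      have hFn := norm_nonneg (F ζ)
      have h3 : (0:ℝ) < (1 - ‖a‖ ^ 2) * (1 - ‖F ζ‖ ^ 2) :=
        mul_pos (by linarith) (by nlinarith)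
      have h4 : ‖G ζ‖ ^ 2 < 1 := by nlinarith
      nlinarith [norm_nonneg (G ζ), h4]
    -- Schwarz lemma for `G`
    have hmapG : Set.MapsTo G (ball 0 1) (ball (G 0) 1) := fun ζ hζ => by
      rw [mem_ball, dist_eq_norm, hG0, sub_zero]; exact hGlt ζ hζ
    have hS := Complex.dist_le_div_mul_dist_of_mapsTo_ball hGd (hmapG.mono_right ball_subset_closedBall) hz
    rw [hG0] at hS
    have hGz : ‖G z‖ ≤ ‖z‖ := by simpa [dist_eq_norm] using hS
    -- conclude
    have hidz := hid z hz
    have hGz2 : ‖G z‖ ^ 2 ≤ ‖z‖ ^ 2 := by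
      have := norm_nonneg (G z)
      nlinarith
    have hD0 : (0:ℝ) ≤ ‖1 - α z‖ ^ 2 := by positivity
    have hstep : ‖1 - α z‖ ^ 2 * (1 - ‖z‖ ^ 2)
        ≤ (1 - ‖F z‖ ^ 2) * (1 - ‖a‖ ^ 2) := by
      have h5 : ‖1 - α z‖ ^ 2 * (1 - ‖z‖ ^ 2)
          ≤ ‖1 - α z‖ ^ 2 * (1 - ‖G z‖ ^ 2) := by nlinarith
      calc ‖1 - α z‖ ^ 2 * (1 - ‖z‖ ^ 2)
          ≤ ‖1 - α z‖ ^ 2 * (1 - ‖G z‖ ^ 2) := h5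
        _ = (1 - ‖a‖ ^ 2) * (1 - ‖F z‖ ^ 2) := hidz
        _ = (1 - ‖F z‖ ^ 2) * (1 - ‖a‖ ^ 2) := by ring
    rw [div_le_div_iff₀ (by linarith) hz2]
    exact hstep

open Octo in
/-- Schwarz–Pick type inequality for slice regular self-maps of the octonionic unit
ball. -/
theorem schwarz_pick_type (f : Octo → Octo) (hf : SliceRegular ball1 f)
    (hmap : ∀ w ∈ ball1, f w ∈ ball1) (w : Octo) (hw : w ∈ ball1) :
    |1 - inner' (f 0) (f w)|^2 / (1 - (norm' (f 0))^2)
      ≤ (1 - (norm' (f w))^2) / (1 - (norm' w)^2) := by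
  obtain ⟨I, p, hI, hwp⟩ := exists_slice w
  -- the slice as a complex Hilbert space
  haveI : FiniteDimensional ℝ Octo := inferInstance
  set e := (Oc.equivℝ I hI).toContinuousLinearEquiv with he
  have hecoe : ∀ x : Octo, e x = Oc.mk I hI x := fun x => rfl
  -- the restriction of f to the slice, as a map from the disc
  set F : ℂ → Oc I hI := fun q => e (f (pt I (q.re, q.im))) with hF
  have hnormF : ∀ q : ℂ, ‖F q‖ = norm' (f (pt I (q.re, q.im))) := by
    intro q
    rw [hF]
    show ‖e _‖ = _
    rw [hecoe, Oc.norm_mk]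
  have hptmem : ∀ q : ℂ, q ∈ Metric.ball (0:ℂ) 1 → pt I (q.re, q.im) ∈ ball1 := by
    intro q hq
    rw [mem_ball1, inner'_pt_pt hI]
    have : ‖q‖ < 1 := by simpa [Metric.mem_ball, dist_zero_right] using hq
    have h2 : ‖q‖ ^ 2 = q.re ^ 2 + q.im ^ 2 := by
      rw [Complex.sq_norm, Complex.normSq_apply]; ring
    nlinarith [norm_nonneg q]
  -- differentiability of F
  have hFd : DifferentiableOn ℂ F (Metric.ball 0 1) := by
    intro q hq
    apply DifferentiableAt.differentiableWithinAt
    obtain ⟨fx, fy, hD, hCR⟩ := hf I hI (q.re, q.im) (hptmem q hq)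
    have hfy : fy = mul' I fx := by
      have h1 : fx = -(mul' I fy) := by
        have := hCR
        rw [add_eq_zero_iff_eq_neg] at this
        exact this
      rw [h1, mul'_neg_right, isImUnit_JJ hI, neg_neg]
    -- the real derivative of the complex-coordinates map
    have hRP : HasFDerivAt (fun z : ℂ => ((z.re, z.im) : ℝ × ℝ))
        (Complex.equivRealProdCLM : ℂ →L[ℝ] ℝ × ℝ) q :=
      (Complex.equivRealProdCLM : ℂ →L[ℝ] ℝ × ℝ).hasFDerivAt
    have h2 : HasFDerivAt (fun z : ℂ => f (pt I (z.re, z.im)))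
        (((ContinuousLinearMap.fst ℝ ℝ ℝ).smulRight fx
          + (ContinuousLinearMap.snd ℝ ℝ ℝ).smulRight fy).comp
            (Complex.equivRealProdCLM : ℂ →L[ℝ] ℝ × ℝ)) q :=
      HasFDerivAt.comp (g := fun q : ℝ × ℝ => f (pt I q)) q hD hRP
    have h3 : HasFDerivAt F
        ((e : Octo →L[ℝ] Oc I hI).comp
          (((ContinuousLinearMap.fst ℝ ℝ ℝ).smulRight fx
            + (ContinuousLinearMap.snd ℝ ℝ ℝ).smulRight fy).comp
              (Complex.equivRealProdCLM : ℂ →L[ℝ] ℝ × ℝ))) q :=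
      HasFDerivAt.comp q ((e : Octo →L[ℝ] Oc I hI).hasFDerivAt) h2
    have hres : (ContinuousLinearMap.toSpanSingleton ℂ (e fx)).restrictScalars ℝ
        = (e : Octo →L[ℝ] Oc I hI).comp
          (((ContinuousLinearMap.fst ℝ ℝ ℝ).smulRight fx
            + (ContinuousLinearMap.snd ℝ ℝ ℝ).smulRight fy).comp
              (Complex.equivRealProdCLM : ℂ →L[ℝ] ℝ × ℝ)) := by
      apply ContinuousLinearMap.ext
      intro c
      simp only [ContinuousLinearMap.coe_restrictScalars',
        ContinuousLinearMap.toSpanSingleton_apply, ContinuousLinearMap.coe_comp',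
        Function.comp_apply, ContinuousLinearMap.add_apply,
        ContinuousLinearMap.smulRight_apply, ContinuousLinearMap.coe_fst',
        ContinuousLinearMap.coe_snd']
      have h4 : c • e fx = Oc.mk I hI (c.re • fx + c.im • mul' I fx) := by
        rw [hecoe, Oc.smul_def, Oc.unmk_mk]
      rw [h4, ← hfy]
      rfl
    exact (hasFDerivAt_of_restrictScalars (𝕜 := ℝ) h3 hres).differentiableAt
  -- F maps the disc into the unit ball
  have hFm : ∀ q ∈ Metric.ball (0:ℂ) 1, ‖F q‖ < 1 := by
    intro q hq
    rw [hnormF]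
    have := hmap _ (hptmem q hq)
    rwa [ball1, Set.mem_setOf_eq] at this
  -- the point on the disc corresponding to w
  set z₀ : ℂ := ⟨p.1, p.2⟩ with hz₀def
  have hz₀n : ‖z₀‖ = norm' w := by
    rw [hwp, norm'_pt hI, Complex.norm_def, Complex.normSq_mk]
    congr 1
    ring
  have hz₀ : z₀ ∈ Metric.ball (0:ℂ) 1 := by
    rw [Metric.mem_ball, dist_zero_right, hz₀n]
    rwa [ball1, Set.mem_setOf_eq] at hw
  -- identify the values of F
  have hF0 : F 0 = Oc.mk I hI (f 0) := by
    rw [hF]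
    show e (f (pt I ((0:ℂ).re, (0:ℂ).im))) = _
    rw [show ((0:ℂ).re, (0:ℂ).im) = ((0:ℝ), (0:ℝ)) from rfl, pt_zero, hecoe]
  have hFz : F z₀ = Oc.mk I hI (f w) := by
    rw [hF]
    show e (f (pt I (z₀.re, z₀.im))) = _
    rw [show (z₀.re, z₀.im) = p from rfl, ← hwp, hecoe]
  -- apply the core inequality
  have hcore := schwarz_pick_core hFd hFm hz₀
  rw [hF0, hFz, Oc.norm_mk, Oc.norm_mk, hz₀n] at hcore
  -- compare the numerators
  have hre : (1 : ℝ) - inner' (f 0) (f w)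
      = (1 - (inner ℂ (Oc.mk I hI (f 0)) (Oc.mk I hI (f w)) : ℂ)).re := by
    rw [Complex.sub_re, Complex.one_re, Oc.inner_re]
  have habs : |1 - inner' (f 0) (f w)|
      ≤ ‖1 - (inner ℂ (Oc.mk I hI (f 0)) (Oc.mk I hI (f w)) : ℂ)‖ := by
    rw [hre]
    exact Complex.abs_re_le_norm _
  have hsq : |1 - inner' (f 0) (f w)| ^ 2
      ≤ ‖1 - (inner ℂ (Oc.mk I hI (f 0)) (Oc.mk I hI (f w)) : ℂ)‖ ^ 2 :=
    pow_le_pow_left₀ (abs_nonneg _) habs 2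
  have hf0 : (0:ℝ) < 1 - norm' (f 0) ^ 2 := by
    have h0b : (0 : Octo) ∈ ball1 := by
      rw [mem_ball1, inner'_zero_left]; norm_num
    have := hmap 0 h0b
    rw [mem_ball1] at this
    rw [norm'_sq]
    linarith
  calc |1 - inner' (f 0) (f w)| ^ 2 / (1 - norm' (f 0) ^ 2)
      ≤ ‖1 - (inner ℂ (Oc.mk I hI (f 0)) (Oc.mk I hI (f w)) : ℂ)‖ ^ 2
          / (1 - norm' (f 0) ^ 2) := by
        exact (div_le_div_iff_of_pos_right hf0).mpr hsq
    _ ≤ (1 - norm' (f w) ^ 2) / (1 - norm' w ^ 2) := hcore
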